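/- Every fully commutative element w of the affine Coxeter group W(Ã_2) (generators σ_1, σ_2, a_3, all pairwise braid relations of order 3) has exactly one of the following forms: w = x (σ_2σ_1a_3)^k y with x ∈ {1, a_3, σ_1a_3} and y ∈ {1, σ_2, σ_2σ_1}, or w = x' (σ_1σ_2a_3)^k y' with x' ∈ {1, a_3, σ_2a_3} and y' ∈ {1, σ_1, σ_1σ_2}, for some integer k ≥ 0. -/

import Mathlib

open CoxeterSystem

/-- The Coxeter matrix of affine type Ãₙ: generators indexed by `Fin (n+1)` arranged in a
cycle (index `k` is `σ_{k+1}` for `k < n`, and index `n` is `a_{n+1}`); cyclically adjacent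
generators braid with order 3, and all other pairs commute. -/
def affineAMatrix (n : ℕ) : CoxeterMatrix (Fin (n + 1)) where
  M := Matrix.of fun i j : Fin (n + 1) =>
    if i = j then 1 else if i - j = 1 ∨ j - i = 1 then 3 else 2
  isSymm := by
    unfold Matrix.IsSymm
    ext i j
    simp only [Matrix.transpose_apply, Matrix.of_apply]
    by_cases h : i = j
    · simp [h]
    · simp [h, Ne.symm h, or_comm]
  diagonal := by simp
  off_diagonal := by aesop

def CommMove {B : Type*} (M : CoxeterMatrix B) (ω₁ ω₂ : List B) : Prop :=
  ∃ (l r : List B) (s t : B), M s t = 2 ∧ ω₁ = l ++ s :: t :: r ∧ ω₂ = l ++ t :: s :: r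

def CommEquiv {B : Type*} (M : CoxeterMatrix B) : List B → List B → Prop :=
  Relation.ReflTransGen (CommMove M)

def IsRedexOf {B W : Type*} [Group W] {M : CoxeterMatrix B} (cs : CoxeterSystem M W)
    (ω : List B) (w : W) : Prop :=
  cs.wordProd ω = w ∧ cs.IsReduced ω

def IsFC {B W : Type*} [Group W] {M : CoxeterMatrix B} (cs : CoxeterSystem M W) (w : W) : Prop :=
  ∀ ω₁ ω₂, IsRedexOf cs ω₁ w → IsRedexOf cs ω₂ w → CommEquiv M ω₁ ω₂

/-- The decreasing word `[i, i-1, ..., j]` of (1-based) generator subscripts. -/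
def decW (i j : ℕ) : List ℕ := (List.range' j (i + 1 - j)).reverse

/-- The increasing word `[i, i+1, ..., j]` of (1-based) generator subscripts. -/
def incW (i j : ℕ) : List ℕ := List.range' i (j + 1 - i)

namespace FCA2

open Fin.NatCast Fin.CommRing

lemma M2_ne_two : ∀ i j : Fin 3, affineAMatrix 2 i j ≠ 2 := by
  intro i j; fin_cases i <;> fin_cases j <;> decide

lemma M2_three : ∀ i j : Fin 3, i ≠ j → affineAMatrix 2 i j = 3 := by
  intro i j; fin_cases i <;> fin_cases j <;> decide

lemma commEquiv_eq {ω₁ ω₂ : List (Fin 3)} (h : CommEquiv (affineAMatrix 2) ω₁ ω₂) :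
    ω₁ = ω₂ := by
  induction h with
  | refl => rfl
  | tail _ hmove ih =>
    obtain ⟨l, r, s, t, hst, _, _⟩ := hmove
    exact absurd hst (M2_ne_two s t)

variable {W : Type*} [Group W] (cs : CoxeterSystem (affineAMatrix 2) W)

lemma braid {a b : Fin 3} (hab : a ≠ b) :
    cs.simple a * cs.simple b * cs.simple a = cs.simple b * cs.simple a * cs.simple b := by
  have h3 := cs.simple_mul_simple_pow a b
  rw [M2_three a b hab] at h3
  have key : (cs.simple a * cs.simple b * cs.simple a) *
      (cs.simple b * cs.simple a * cs.simple b) = 1 := by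
    rw [show (3 : ℕ) = 2 + 1 from rfl, pow_succ, pow_two] at h3
    rw [← h3]; group
  have hB : (cs.simple b * cs.simple a * cs.simple b) *
      (cs.simple b * cs.simple a * cs.simple b) = 1 := by
    have h1 := cs.simple_mul_simple_self a
    have h2 := cs.simple_mul_simple_self b
    calc (cs.simple b * cs.simple a * cs.simple b) * (cs.simple b * cs.simple a * cs.simple b)
        = cs.simple b * (cs.simple a * ((cs.simple b * cs.simple b) *
          (cs.simple a * cs.simple b))) := by group
      _ = 1 := by rw [h2, one_mul, ← mul_assoc (cs.simple a), h1, one_mul, h2]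
  exact (mul_eq_one_iff_eq_inv.mp key).trans (mul_eq_one_iff_eq_inv.mp hB).symm

/-- arithmetic word -/
def aw (a d : Fin 3) (L : ℕ) : List (Fin 3) :=
  (List.range L).map (fun m : ℕ => a + d * (m : Fin 3))

@[simp] lemma aw_length (a d : Fin 3) (L : ℕ) : (aw a d L).length = L := by
  rw [aw, List.length_map, List.length_range]

lemma aw_getElem (a d : Fin 3) (L : ℕ) (i : ℕ) (h : i < (aw a d L).length) :
    (aw a d L)[i] = a + d * (i : Fin 3) := by
  simp only [aw, List.getElem_map, List.getElem_range]

lemma aw_append (a d : Fin 3) (m n : ℕ) :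
    aw a d (m + n) = aw a d m ++ aw (a + d * (m : Fin 3)) d n := by
  unfold aw
  rw [List.range_add, List.map_append, List.map_map]
  congr 1
  apply List.map_congr_left
  intro k _
  simp only [Function.comp_apply]
  push_cast
  ring

def rep {α : Type*} (P : List α) : ℕ → List α
  | 0 => []
  | k + 1 => P ++ rep P k

lemma aw_rep (a d : Fin 3) (k r : ℕ) :
    aw a d (3 * k + r) = rep (aw a d 3) k ++ aw a d r := by
  induction k with
  | zero => simp [rep]
  | succ k ih =>
    have h : 3 * (k + 1) + r = 3 + (3 * k + r) := by ring
    rw [h, aw_append, show ((3 : ℕ) : Fin 3) = 0 from rfl, mul_zero, add_zero, ih, rep,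
      List.append_assoc]

lemma prod_rep (P : List (Fin 3)) (k : ℕ) :
    cs.wordProd (rep P k) = (cs.wordProd P) ^ k := by
  induction k with
  | zero => simp [rep, wordProd_nil]
  | succ k ih =>
    rw [rep, wordProd_append, ih, pow_succ']

lemma fin3_step : ∀ (p q z d : Fin 3), d ≠ 0 → q = p + d → z ≠ q → z ≠ p → z = q + d := by
  decide


lemma factor2 {α : Type*} (ω : List α) (i : ℕ) (h : i + 1 < ω.length) :
    ω = ω.take i ++ ω[i] :: ω[i+1] :: ω.drop (i+2) := by
  conv_lhs => rw [← List.take_append_drop i ω]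
  congr 1
  rw [List.drop_eq_getElem_cons (by omega)]
  congr 1
  rw [List.drop_eq_getElem_cons (by omega)]

lemma factor3 {α : Type*} (ω : List α) (i : ℕ) (h : i + 2 < ω.length) :
    ω = ω.take i ++ ω[i] :: ω[i+1] :: ω[i+2] :: ω.drop (i+3) := by
  conv_lhs => rw [← List.take_append_drop i ω]
  congr 1
  rw [List.drop_eq_getElem_cons (by omega)]
  congr 1
  rw [List.drop_eq_getElem_cons (by omega)]
  congr 1
  rw [List.drop_eq_getElem_cons (by omega)]

lemma ne_succ {w : W} (hw : IsFC cs w) {ω : List (Fin 3)} (hr : IsRedexOf cs ω w)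
    (i : ℕ) (h : i + 1 < ω.length) : ω[i+1] ≠ ω[i] := by
  intro heq
  have hfac := factor2 ω i h
  rw [heq] at hfac
  have hlen : cs.length w = ω.length := by
    have := hr.2
    unfold CoxeterSystem.IsReduced at this
    rw [hr.1] at this
    exact this
  have hww : cs.wordProd (ω.take i ++ ω.drop (i+2)) = w := by
    rw [← hr.1]
    conv_rhs => rw [hfac]
    rw [wordProd_append, wordProd_append, wordProd_cons, wordProd_cons,
      ← mul_assoc (cs.simple ω[i]), cs.simple_mul_simple_self, one_mul]
  have hle := cs.length_wordProd_le (ω.take i ++ ω.drop (i+2))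
  rw [hww] at hle
  rw [List.length_append, List.length_take, List.length_drop] at hle
  omega

lemma ne_two {w : W} (hw : IsFC cs w) {ω : List (Fin 3)} (hr : IsRedexOf cs ω w)
    (i : ℕ) (h : i + 2 < ω.length) : ω[i+2] ≠ ω[i] := by
  intro heq
  have hab : ω[i+1] ≠ ω[i] := ne_succ cs hw hr i (by omega)
  have hfac := factor3 ω i h
  rw [heq] at hfac
  set a := ω[i] with ha
  set b := ω[i+1]'(by omega) with hb
  set ω' : List (Fin 3) := ω.take i ++ b :: a :: b :: ω.drop (i+3) with hω'
  have hlen : cs.length w = ω.length := by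
    have := hr.2
    unfold CoxeterSystem.IsReduced at this
    rw [hr.1] at this
    exact this
  have hprod : cs.wordProd ω' = w := by
    rw [← hr.1]
    conv_rhs => rw [hfac]
    rw [hω', wordProd_append, wordProd_append, wordProd_cons, wordProd_cons, wordProd_cons,
      wordProd_cons, wordProd_cons, wordProd_cons]
    congr 1
    rw [← mul_assoc, ← mul_assoc, ← mul_assoc, ← mul_assoc,
      braid cs (Ne.symm hab)]
  have hlen' : ω'.length = ω.length := by
    rw [hω']
    conv_rhs => rw [hfac]
    simp
  have hred' : cs.IsReduced ω' := by
    unfold CoxeterSystem.IsReduced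
    rw [hprod, hlen, hlen']
  have hcomm := hw ω ω' ⟨hr.1, hr.2⟩ ⟨hprod, hred'⟩
  have heq2 := commEquiv_eq hcomm
  rw [hfac, hω'] at heq2
  have := List.append_cancel_left heq2
  simp only [List.cons.injEq] at this
  exact hab (ha ▸ hb ▸ this.1.symm)

lemma word_arith {ω : List (Fin 3)}
    (h1 : ∀ i : ℕ, (h : i + 1 < ω.length) → ω[i+1] ≠ ω[i])
    (h2 : ∀ i : ℕ, (h : i + 2 < ω.length) → ω[i+2] ≠ ω[i])
    (hL : 2 ≤ ω.length) :
    ∃ a d : Fin 3, d ≠ 0 ∧ ω = aw a d ω.length := by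
  have h0 : 0 < ω.length := by omega
  have h1' : 1 < ω.length := by omega
  refine ⟨ω[0], ω[1] - ω[0], sub_ne_zero_of_ne (h1 0 h1'), ?_⟩
  set a := ω[0] with ha
  set d := ω[1] - ω[0] with hd
  have hdne : d ≠ 0 := sub_ne_zero_of_ne (h1 0 h1')
  have hstep : ∀ i : ℕ, (h : i + 1 < ω.length) → ω[i+1] = ω[i] + d := by
    intro i
    induction i with
    | zero =>
      intro h
      show ω[1] = ω[0] + d
      rw [hd]
      ring
    | succ i ih =>
      intro h
      exact fin3_step ω[i] ω[i+1] ω[i+2] d hdne (ih (by omega)) (h1 (i+1) h) (h2 i h)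
  have hval : ∀ i : ℕ, (h : i < ω.length) → ω[i] = a + d * (i : Fin 3) := by
    intro i
    induction i with
    | zero => intro h; simp [ha]
    | succ i ih =>
      intro h
      rw [hstep i h, ih (by omega)]
      push_cast
      ring
  apply List.ext_getElem
  · simp
  · intro i hi hi'
    rw [hval i hi, aw_getElem]

lemma main_helper (a d : Fin 3) (X : List (Fin 3)) (n : ℕ) (w : W)
    (hπ : w = cs.wordProd (X ++ aw a d n)) :
    ∃ k r, r < 3 ∧
      w = cs.wordProd X * (cs.wordProd (aw a d 3)) ^ k * cs.wordProd (aw a d r) := by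
  obtain ⟨k, r, hr, hn⟩ : ∃ k r, r < 3 ∧ n = 3 * k + r :=
    ⟨n / 3, n % 3, Nat.mod_lt _ (by norm_num), (Nat.div_add_mod n 3).symm⟩
  subst hn
  refine ⟨k, r, hr, ?_⟩
  rw [hπ, aw_rep, wordProd_append, wordProd_append, prod_rep, ← mul_assoc]

lemma case_d2 (w : W) (X : List (Fin 3)) (n : ℕ)
    (hπ : w = cs.wordProd (X ++ aw 1 2 n)) :
    ∃ k y, y ∈ ({1, cs.simple 1, cs.simple 1 * cs.simple 0} : Set W) ∧
      w = cs.wordProd X * (cs.simple 1 * cs.simple 0 * cs.simple 2) ^ k * y := by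
  obtain ⟨k, r, hr, hw⟩ := main_helper cs 1 2 X n w hπ
  have hp : cs.wordProd (aw 1 2 3) = cs.simple 1 * cs.simple 0 * cs.simple 2 := by
    rw [show aw 1 2 3 = [1, 0, 2] from by decide]
    simp [wordProd_cons, wordProd_nil, mul_assoc]
  interval_cases r
  · exact ⟨k, 1, by simp, by
      rw [hw, hp, show aw (1 : Fin 3) 2 0 = [] from by decide, wordProd_nil]⟩
  · exact ⟨k, cs.simple 1, by simp, by
      rw [hw, hp, show aw (1 : Fin 3) 2 1 = [1] from by decide]
      simp [wordProd_cons, wordProd_nil]⟩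
  · exact ⟨k, cs.simple 1 * cs.simple 0, by simp, by
      rw [hw, hp, show aw (1 : Fin 3) 2 2 = [1, 0] from by decide]
      simp [wordProd_cons, wordProd_nil, mul_assoc]⟩

lemma case_d1 (w : W) (X : List (Fin 3)) (n : ℕ)
    (hπ : w = cs.wordProd (X ++ aw 0 1 n)) :
    ∃ k y, y ∈ ({1, cs.simple 0, cs.simple 0 * cs.simple 1} : Set W) ∧
      w = cs.wordProd X * (cs.simple 0 * cs.simple 1 * cs.simple 2) ^ k * y := by
  obtain ⟨k, r, hr, hw⟩ := main_helper cs 0 1 X n w hπ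
  have hp : cs.wordProd (aw 0 1 3) = cs.simple 0 * cs.simple 1 * cs.simple 2 := by
    rw [show aw 0 1 3 = [0, 1, 2] from by decide]
    simp [wordProd_cons, wordProd_nil, mul_assoc]
  interval_cases r
  · exact ⟨k, 1, by simp, by
      rw [hw, hp, show aw (0 : Fin 3) 1 0 = [] from by decide, wordProd_nil]⟩
  · exact ⟨k, cs.simple 0, by simp, by
      rw [hw, hp, show aw (0 : Fin 3) 1 1 = [0] from by decide]
      simp [wordProd_cons, wordProd_nil]⟩
  · exact ⟨k, cs.simple 0 * cs.simple 1, by simp, by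
      rw [hw, hp, show aw (0 : Fin 3) 1 2 = [0, 1] from by decide]
      simp [wordProd_cons, wordProd_nil, mul_assoc]⟩

end FCA2

open FCA2
open Fin.NatCast Fin.CommRing

/-- Classification of fully commutative elements of `W(Ã₂)`: with `σ₁ = simple 0`,
`σ₂ = simple 1`, `a₃ = simple 2`, every fully commutative `w` is of the form
`x (σ₂σ₁a₃)^k y` with `x ∈ {1, a₃, σ₁a₃}`, `y ∈ {1, σ₂, σ₂σ₁}`, or of the form
`x' (σ₁σ₂a₃)^k y'` with `x' ∈ {1, a₃, σ₂a₃}`, `y' ∈ {1, σ₁, σ₁σ₂}`. -/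
theorem fc_affine_A2_classification {W : Type*} [Group W]
    (cs : CoxeterSystem (affineAMatrix 2) W) (w : W) (hw : IsFC cs w) :
    (∃ (k : ℕ) (x y : W),
      x ∈ ({1, cs.simple 2, cs.simple 0 * cs.simple 2} : Set W) ∧
      y ∈ ({1, cs.simple 1, cs.simple 1 * cs.simple 0} : Set W) ∧
      w = x * (cs.simple 1 * cs.simple 0 * cs.simple 2) ^ k * y) ∨
    (∃ (k : ℕ) (x y : W),
      x ∈ ({1, cs.simple 2, cs.simple 1 * cs.simple 2} : Set W) ∧
      y ∈ ({1, cs.simple 0, cs.simple 0 * cs.simple 1} : Set W) ∧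
      w = x * (cs.simple 0 * cs.simple 1 * cs.simple 2) ^ k * y) := by
  obtain ⟨ω, hred, hπ⟩ := cs.exists_reduced_word' w
  have hr : IsRedexOf cs ω w := ⟨hπ.symm, hred⟩
  rcases Nat.lt_or_ge ω.length 2 with hL | hL
  · match ω, hπ with
    | [], hπ =>
      left
      exact ⟨0, 1, 1, by simp, by simp, by simp [hπ, wordProd_nil]⟩
    | [c], hπ =>
      have hwc : w = cs.simple c := by rw [hπ]; simp [wordProd_cons, wordProd_nil]
      fin_cases c
      · right; exact ⟨0, 1, cs.simple 0, by simp, by simp, by simp [hwc]⟩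
      · left; exact ⟨0, 1, cs.simple 1, by simp, by simp, by simp [hwc]⟩
      · left; exact ⟨0, cs.simple 2, 1, by simp, by simp, by simp [hwc]⟩
    | c :: c' :: t, hπ => simp at hL
  · obtain ⟨a, d, hd, hωeq⟩ := word_arith
      (fun i h => ne_succ cs hw hr i h) (fun i h => ne_two cs hw hr i h) hL
    rw [hωeq] at hπ
    have hd12 : d = 1 ∨ d = 2 := by
      have : ∀ d : Fin 3, d ≠ 0 → d = 1 ∨ d = 2 := by decide
      exact this d hd
    have ha3 : a = 0 ∨ a = 1 ∨ a = 2 := by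
      have : ∀ a : Fin 3, a = 0 ∨ a = 1 ∨ a = 2 := by decide
      exact this a
    rcases hd12 with rfl | rfl
    · -- d = 1 : increasing case, right disjunct
      right
      rcases ha3 with rfl | rfl | rfl
      · -- a = 0 : x' = 1
        rw [show aw 0 1 ω.length = [] ++ aw 0 1 ω.length from (List.nil_append _).symm] at hπ
        obtain ⟨k, y, hy, hwk⟩ := case_d1 cs w [] ω.length hπ
        refine ⟨k, 1, y, by simp, hy, ?_⟩
        rw [hwk]
        simp [wordProd_nil]
      · -- a = 1 : x' = s1 * s2
        obtain ⟨n, hn⟩ : ∃ n, ω.length = 2 + n := ⟨ω.length - 2, by omega⟩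
        rw [hn, aw_append, show aw (1 : Fin 3) 1 2 = [1, 2] from by decide,
          show (1 : Fin 3) + 1 * ((2 : ℕ) : Fin 3) = 0 from by decide] at hπ
        obtain ⟨k, y, hy, hwk⟩ := case_d1 cs w [1, 2] n hπ
        refine ⟨k, cs.simple 1 * cs.simple 2, y, by simp, hy, ?_⟩
        rw [hwk]
        simp [wordProd_cons, wordProd_nil, mul_assoc]
      · -- a = 2 : x' = s2
        obtain ⟨n, hn⟩ : ∃ n, ω.length = 1 + n := ⟨ω.length - 1, by omega⟩
        rw [hn, aw_append, show aw (2 : Fin 3) 1 1 = [2] from by decide,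
          show (2 : Fin 3) + 1 * ((1 : ℕ) : Fin 3) = 0 from by decide] at hπ
        obtain ⟨k, y, hy, hwk⟩ := case_d1 cs w [2] n hπ
        refine ⟨k, cs.simple 2, y, by simp, hy, ?_⟩
        rw [hwk]
        simp [wordProd_cons, wordProd_nil]
    · -- d = 2 : decreasing case, left disjunct
      left
      rcases ha3 with rfl | rfl | rfl
      · -- a = 0 : x = s0 * s2
        obtain ⟨n, hn⟩ : ∃ n, ω.length = 2 + n := ⟨ω.length - 2, by omega⟩
        rw [hn, aw_append, show aw (0 : Fin 3) 2 2 = [0, 2] from by decide,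
          show (0 : Fin 3) + 2 * ((2 : ℕ) : Fin 3) = 1 from by decide] at hπ
        obtain ⟨k, y, hy, hwk⟩ := case_d2 cs w [0, 2] n hπ
        refine ⟨k, cs.simple 0 * cs.simple 2, y, by simp, hy, ?_⟩
        rw [hwk]
        simp [wordProd_cons, wordProd_nil, mul_assoc]
      · -- a = 1 : x = 1
        rw [show aw 1 2 ω.length = [] ++ aw 1 2 ω.length from (List.nil_append _).symm] at hπ
        obtain ⟨k, y, hy, hwk⟩ := case_d2 cs w [] ω.length hπ
        refine ⟨k, 1, y, by simp, hy, ?_⟩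
        rw [hwk]
        simp [wordProd_nil]
      · -- a = 2 : x = s2
        obtain ⟨n, hn⟩ : ∃ n, ω.length = 1 + n := ⟨ω.length - 1, by omega⟩
        rw [hn, aw_append, show aw (2 : Fin 3) 2 1 = [2] from by decide,
          show (2 : Fin 3) + 2 * ((1 : ℕ) : Fin 3) = 1 from by decide] at hπ
        obtain ⟨k, y, hy, hwk⟩ := case_d2 cs w [2] n hπ
        refine ⟨k, cs.simple 2, y, by simp, hy, ?_⟩
        rw [hwk]
        simp [wordProd_cons, wordProd_nil]
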